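/- Let v ∈ [0,1] and let ρ_W = v·|ψ⁻⟩⟨ψ⁻| + ((1−v)/4)·1₄ be the two-qubit Werner state, where |ψ⁻⟩ = (e_{01} − e_{10})/√2 ∈ ℂ² ⊗ ℂ² is the singlet state (so |ψ⁻⟩⟨ψ⁻| is its rank-one projection, a 4×4 matrix indexed by Fin 2 × Fin 2) and 1₄ is the 4×4 identity matrix. Then I₂(ρ_W) = 2v; consequently the Werner state violates the imaginarity steering inequality, I₂(ρ_W) > √2, if and only if v > 1/√2. -/

import Mathlib

open Matrix Kronecker
open scoped ComplexOrder

/-- Trace norm of a square complex matrix: `Tr[sqrt(Aᴴ A)]`. -/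
noncomputable def traceNorm {n : Type*} [Fintype n] [DecidableEq n]
    (A : Matrix n n ℂ) : ℝ :=
  (((Matrix.posSemidef_conjTranspose_mul_self A).1.eigenvectorUnitary.1 *
      diagonal (((↑) : ℝ → ℂ) ∘ (Real.sqrt ·) ∘ (Matrix.posSemidef_conjTranspose_mul_self A).1.eigenvalues) *
      (star (Matrix.posSemidef_conjTranspose_mul_self A).1.eigenvectorUnitary :
        Matrix n n ℂ)).trace).re

/-- Robustness of imaginarity: `(1/2) ‖ρ - ρᵀ‖₁`. -/
noncomputable def roi {n : Type*} [Fintype n] [DecidableEq n]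
    (ρ : Matrix n n ℂ) : ℝ :=
  (1 / 2) * traceNorm (ρ - ρ.transpose)
def σx : Matrix (Fin 2) (Fin 2) ℂ := !![0, 1; 1, 0]
def σy : Matrix (Fin 2) (Fin 2) ℂ := !![0, -Complex.I; Complex.I, 0]
def σz : Matrix (Fin 2) (Fin 2) ℂ := !![1, 0; 0, -1]
/-- Hadamard matrix (x-basis change). -/
noncomputable def Hm : Matrix (Fin 2) (Fin 2) ℂ :=
  (Real.sqrt 2 : ℂ)⁻¹ • !![1, 1; 1, -1]
/-- Eigenvector matrix of σy (y-basis change). -/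
noncomputable def Vm : Matrix (Fin 2) (Fin 2) ℂ :=
  (Real.sqrt 2 : ℂ)⁻¹ • !![1, 1; Complex.I, -Complex.I]

/-- Robustness of imaginarity in the x-basis. -/
noncomputable def roiX (σ : Matrix (Fin 2) (Fin 2) ℂ) : ℝ := roi (Hm * σ * Hm)
/-- Robustness of imaginarity in the y-basis. -/
noncomputable def roiY (σ : Matrix (Fin 2) (Fin 2) ℂ) : ℝ := roi (Vmᴴ * σ * Vm)
noncomputable def n1 (ρ : Matrix (Fin 2 × Fin 2) (Fin 2 × Fin 2) ℂ) : ℝ :=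
  ((((1 : Matrix (Fin 2) (Fin 2) ℂ) ⊗ₖ σx) * ρ).trace).re
noncomputable def n2 (ρ : Matrix (Fin 2 × Fin 2) (Fin 2 × Fin 2) ℂ) : ℝ :=
  ((((1 : Matrix (Fin 2) (Fin 2) ℂ) ⊗ₖ σy) * ρ).trace).re
noncomputable def t11 (ρ : Matrix (Fin 2 × Fin 2) (Fin 2 × Fin 2) ℂ) : ℝ :=
  (((σx ⊗ₖ σx) * ρ).trace).re
noncomputable def t22 (ρ : Matrix (Fin 2 × Fin 2) (Fin 2 × Fin 2) ℂ) : ℝ :=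
  (((σy ⊗ₖ σy) * ρ).trace).re

/-- The imaginarity steering functional. -/
noncomputable def I2 (ρ : Matrix (Fin 2 × Fin 2) (Fin 2 × Fin 2) ℂ) : ℝ :=
  (1 / 2) * (|n1 ρ - t11 ρ| + |n1 ρ + t11 ρ| + |n2 ρ - t22 ρ| + |n2 ρ + t22 ρ|)

/-- The singlet state `|ψ⁻⟩ = (e₀₁ − e₁₀)/√2` as a vector in `ℂ² ⊗ ℂ²`. -/
noncomputable def singlet : Fin 2 × Fin 2 → ℂ := fun p =>
  if p = ((0 : Fin 2), (1 : Fin 2)) then (Real.sqrt 2 : ℂ)⁻¹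
  else if p = ((1 : Fin 2), (0 : Fin 2)) then -(Real.sqrt 2 : ℂ)⁻¹
  else 0

/-- The two-qubit Werner state `v·|ψ⁻⟩⟨ψ⁻| + ((1−v)/4)·𝟙₄`. -/
noncomputable def werner (v : ℝ) : Matrix (Fin 2 × Fin 2) (Fin 2 × Fin 2) ℂ :=
  (v : ℂ) • Matrix.vecMulVec singlet (star singlet)
    + (((1 - v) / 4 : ℝ) : ℂ) • (1 : Matrix (Fin 2 × Fin 2) (Fin 2 × Fin 2) ℂ)

lemma hs2 : ((Real.sqrt 2 : ℂ))⁻¹ * ((Real.sqrt 2 : ℂ))⁻¹ = 1/2 := by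
  rw [← mul_inv]
  norm_cast
  rw [Real.mul_self_sqrt (by norm_num)]
  norm_num

lemma t11_werner (v : ℝ) : t11 (werner v) = -v := by
  simp only [t11, werner, Matrix.trace, Matrix.diag, Matrix.mul_apply,
    Fintype.sum_prod_type, Fin.sum_univ_two, Matrix.add_apply, Matrix.smul_apply,
    Matrix.kroneckerMap_apply, σx, Matrix.vecMulVec_apply, singlet, Matrix.one_apply,
    Pi.star_apply]
  norm_num [Complex.ext_iff, hs2, Prod.ext_iff]
  ring

lemma t22_werner (v : ℝ) : t22 (werner v) = -v := by
  simp only [t22, werner, Matrix.trace, Matrix.diag, Matrix.mul_apply,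
    Fintype.sum_prod_type, Fin.sum_univ_two, Matrix.add_apply, Matrix.smul_apply,
    Matrix.kroneckerMap_apply, σy, Matrix.vecMulVec_apply, singlet, Matrix.one_apply,
    Pi.star_apply]
  norm_num [Complex.ext_iff, hs2, Prod.ext_iff]
  ring

lemma n1_werner (v : ℝ) : n1 (werner v) = 0 := by
  simp only [n1, werner, Matrix.trace, Matrix.diag, Matrix.mul_apply,
    Fintype.sum_prod_type, Fin.sum_univ_two, Matrix.add_apply, Matrix.smul_apply,
    Matrix.kroneckerMap_apply, σx, Matrix.vecMulVec_apply, singlet, Matrix.one_apply,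
    Pi.star_apply]
  norm_num [Complex.ext_iff, hs2, Prod.ext_iff]

lemma n2_werner (v : ℝ) : n2 (werner v) = 0 := by
  simp only [n2, werner, Matrix.trace, Matrix.diag, Matrix.mul_apply,
    Fintype.sum_prod_type, Fin.sum_univ_two, Matrix.add_apply, Matrix.smul_apply,
    Matrix.kroneckerMap_apply, σy, Matrix.vecMulVec_apply, singlet, Matrix.one_apply,
    Pi.star_apply]
  norm_num [Complex.ext_iff, hs2, Prod.ext_iff]

/-- the Werner state satisfies `I₂(ρ_W) = 2v`, so it violates the
imaginarity steering inequality iff `v > 1/√2`. -/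
theorem stmt15 (v : ℝ) (hv0 : 0 ≤ v) (hv1 : v ≤ 1) :
    I2 (werner v) = 2 * v ∧ (Real.sqrt 2 < I2 (werner v) ↔ 1 / Real.sqrt 2 < v) := by
  have h1 := n1_werner v
  have h2 := n2_werner v
  have h3 := t11_werner v
  have h4 := t22_werner v
  have hI : I2 (werner v) = 2 * v := by
    rw [I2, h1, h2, h3, h4]
    rw [abs_of_nonneg (by linarith), abs_of_nonpos (by linarith)]
    ring
  refine ⟨hI, ?_⟩
  rw [hI]
  have hsp : (0:ℝ) < Real.sqrt 2 := Real.sqrt_pos.mpr (by norm_num)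
  have hss : Real.sqrt 2 * Real.sqrt 2 = 2 := Real.mul_self_sqrt (by norm_num)
  rw [div_lt_iff₀ hsp]
  constructor
  · intro h; nlinarith
  · intro h; nlinarith
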